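/- Let p : ℕ → [1,∞] satisfy limsup_{n→∞} p(n) < ∞. Then every x with Φ_p(x) < ∞ is a null sequence, i.e., ℓ^{p(·)} ⊆ c₀. -/
import Mathlib


open scoped ENNReal

/-- `t ⊞_p s`: for `p < ∞`, `(t^p + s^p)^(1/p)`; for `p = ∞`, `max t s`. -/
noncomputable def boxPlus (p : ℝ≥0∞) (t s : ℝ) : ℝ :=
  if p = ∞ then max t s else (t ^ p.toReal + s ^ p.toReal) ^ (1 / p.toReal)

/-- The recursively defined seminorms `|||x|||_(k)` (0-indexed). -/
noncomputable def seqNorm (p : ℕ → ℝ≥0∞) (x : ℕ → ℝ) : ℕ → ℝ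
  | 0 => boxPlus (p 0) |x 0| |x 1|
  | k + 1 => boxPlus (p (k + 1)) (seqNorm p x k) |x (k + 2)|

/-- `Φ_p(x) = lim_k |||x|||_(k)`, as the supremum of the nondecreasing sequence. -/
noncomputable def Phi (p : ℕ → ℝ≥0∞) (x : ℕ → ℝ) : ℝ≥0∞ :=
  ⨆ k, ENNReal.ofReal (seqNorm p x k)

/-- `x` is a bounded real sequence, i.e. `x ∈ ℓ^∞`. -/
def IsBddSeq (x : ℕ → ℝ) : Prop := ∃ M : ℝ, ∀ n, |x n| ≤ M

/-- Membership in the variable exponent space `ℓ^{p(·)}`. -/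
def MemVLp (p : ℕ → ℝ≥0∞) (x : ℕ → ℝ) : Prop := IsBddSeq x ∧ Phi p x < ⊤

lemma boxPlus_nonneg (p : ℝ≥0∞) {t s : ℝ} (ht : 0 ≤ t) (hs : 0 ≤ s) :
    0 ≤ boxPlus p t s := by
  unfold boxPlus
  split
  · exact le_max_of_le_left ht
  · exact Real.rpow_nonneg (add_nonneg (Real.rpow_nonneg ht _) (Real.rpow_nonneg hs _)) _

lemma seqNorm_nonneg (p : ℕ → ℝ≥0∞) (x : ℕ → ℝ) (k : ℕ) : 0 ≤ seqNorm p x k := by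
  induction k with
  | zero => exact boxPlus_nonneg _ (abs_nonneg _) (abs_nonneg _)
  | succ k ih => exact boxPlus_nonneg _ ih (abs_nonneg _)

lemma le_boxPlus_left (p' : ℝ≥0∞) (hp1 : 1 ≤ p') {t s : ℝ} (ht : 0 ≤ t) (hs : 0 ≤ s) :
    t ≤ boxPlus p' t s := by
  unfold boxPlus
  split
  · exact le_max_left _ _
  · rename_i h
    have ha1 : (1:ℝ) ≤ p'.toReal := by
      have := ENNReal.toReal_mono h hp1
      simpa using this
    have ha0 : p'.toReal ≠ 0 := by linarith
    calc t = (t ^ p'.toReal) ^ (p'.toReal)⁻¹ := (Real.rpow_rpow_inv ht ha0).symm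
    _ ≤ (t ^ p'.toReal + s ^ p'.toReal) ^ (1 / p'.toReal) := by
        rw [one_div]
        exact Real.rpow_le_rpow (Real.rpow_nonneg ht _)
          (le_add_of_nonneg_right (Real.rpow_nonneg hs _)) (by positivity)

lemma seqNorm_mono (p : ℕ → ℝ≥0∞) (hp : ∀ n, 1 ≤ p n) (x : ℕ → ℝ) :
    Monotone (seqNorm p x) := by
  apply monotone_nat_of_le_succ
  intro k
  exact le_boxPlus_left _ (hp _) (seqNorm_nonneg p x k) (abs_nonneg _)

lemma real_rpow_add_rpow_le {a q : ℝ} (ha : 0 < a) (haq : a ≤ q) {t s : ℝ}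
    (ht : 0 ≤ t) (hs : 0 ≤ s) :
    (t ^ q + s ^ q) ^ (1 / q) ≤ (t ^ a + s ^ a) ^ (1 / a) := by
  lift t to NNReal using ht
  lift s to NNReal using hs
  have h := NNReal.rpow_add_rpow_le t s ha haq
  rw [← NNReal.coe_le_coe] at h
  push_cast at h
  exact h

lemma boxPlus_key {q : ℝ} (hq1 : 1 ≤ q) {p' : ℝ≥0∞} (hp1 : 1 ≤ p') (htop : p' ≠ ⊤)
    (hpq : p'.toReal ≤ q) {t s : ℝ} (ht : 0 ≤ t) (hs : 0 ≤ s) :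
    t ^ q + s ^ q ≤ boxPlus p' t s ^ q := by
  have ha1 : (1:ℝ) ≤ p'.toReal := by
    have := ENNReal.toReal_mono htop hp1
    simpa using this
  have h := real_rpow_add_rpow_le (by linarith) hpq ht hs
  rw [boxPlus, if_neg htop]
  have hnn : 0 ≤ t ^ q + s ^ q := add_nonneg (Real.rpow_nonneg ht _) (Real.rpow_nonneg hs _)
  have h2 := Real.rpow_le_rpow (Real.rpow_nonneg hnn _) h (by linarith : (0:ℝ) ≤ q)
  rwa [one_div, Real.rpow_inv_rpow hnn (by linarith)] at h2

theorem subset_c0_of_limsup_lt_top (p : ℕ → ℝ≥0∞) (hp : ∀ n, 1 ≤ p n)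
    (hlim : Filter.limsup p Filter.atTop < ⊤)
    (x : ℕ → ℝ) (hx : MemVLp p x) :
    Filter.Tendsto x Filter.atTop (nhds 0) := by
  obtain ⟨-, hPhi⟩ := hx
  by_contra hnot
  rw [Metric.tendsto_atTop] at hnot
  push_neg at hnot
  obtain ⟨ε, hε, hfreq⟩ := hnot
  simp only [Real.dist_0_eq_abs] at hfreq
  -- eventually p n < L + 1
  set L := Filter.limsup p Filter.atTop with hL
  have hLne : L ≠ ⊤ := hlim.ne
  have hev : ∀ᶠ n in Filter.atTop, p n < L + 1 :=
    Filter.eventually_lt_of_limsup_lt (ENNReal.lt_add_right hLne one_ne_zero)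
  obtain ⟨N₀, hN₀⟩ := Filter.eventually_atTop.mp hev
  have hL1 : L + 1 ≠ ⊤ := by
    simp [ENNReal.add_eq_top, hLne]
  set q : ℝ := max ((L+1).toReal) 1 with hq
  have hq1 : (1:ℝ) ≤ q := le_max_right _ _
  -- bound on seqNorm
  set C := (Phi p x).toReal with hCdef
  have hC : ∀ k, seqNorm p x k ≤ C := by
    intro k
    have h1 : ENNReal.ofReal (seqNorm p x k) ≤ Phi p x := by
      rw [Phi]; exact le_iSup (fun k => ENNReal.ofReal (seqNorm p x k)) k
    have := ENNReal.toReal_mono hPhi.ne h1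
    rwa [ENNReal.toReal_ofReal (seqNorm_nonneg p x k)] at this
  have hεq : (0:ℝ) < ε ^ q := Real.rpow_pos_of_pos hε q
  -- claim
  have claim : ∀ m : ℕ, ∃ k, (m : ℝ) * ε ^ q ≤ seqNorm p x k ^ q := by
    intro m
    induction m with
    | zero => exact ⟨0, by simpa using Real.rpow_nonneg (seqNorm_nonneg p x 0) q⟩
    | succ m ih =>
      obtain ⟨k, hk⟩ := ih
      obtain ⟨n, hn, hxn⟩ := hfreq (max (k + 3) (N₀ + 1))
      have hn1 : k + 3 ≤ n := le_trans (le_max_left _ _) hn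
      have hn2 : N₀ + 1 ≤ n := le_trans (le_max_right _ _) hn
      obtain ⟨j, rfl⟩ : ∃ j, n = j + 2 := ⟨n - 2, by omega⟩
      refine ⟨j + 1, ?_⟩
      have hpj : p (j + 1) < L + 1 := hN₀ (j + 1) (by omega)
      have hpjtop : p (j + 1) ≠ ⊤ := fun h => by rw [h] at hpj; exact (not_top_lt hpj)
      have hpjq : (p (j + 1)).toReal ≤ q :=
        le_trans (ENNReal.toReal_mono hL1 hpj.le) (le_max_left _ _)
      have hstep : seqNorm p x j ^ q + |x (j + 2)| ^ q ≤ seqNorm p x (j + 1) ^ q := by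
        show _ ≤ boxPlus (p (j+1)) (seqNorm p x j) |x (j+2)| ^ q
        exact boxPlus_key hq1 (hp _) hpjtop hpjq (seqNorm_nonneg p x j) (abs_nonneg _)
      have hmono : seqNorm p x k ≤ seqNorm p x j :=
        seqNorm_mono p hp x (by omega)
      have h1 : seqNorm p x k ^ q ≤ seqNorm p x j ^ q :=
        Real.rpow_le_rpow (seqNorm_nonneg p x k) hmono (by linarith)
      have h2 : ε ^ q ≤ |x (j + 2)| ^ q :=
        Real.rpow_le_rpow hε.le hxn (by linarith)
      push_cast
      nlinarith
  obtain ⟨m, hm⟩ := exists_nat_gt (C ^ q / ε ^ q)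
  obtain ⟨k, hk⟩ := claim m
  have hCk : seqNorm p x k ^ q ≤ C ^ q :=
    Real.rpow_le_rpow (seqNorm_nonneg p x k) (hC k) (by linarith)
  rw [div_lt_iff₀ hεq] at hm
  linarith
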